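/- Let f ∈ ℤ[z_1, …, z_n] be a symmetric polynomial (invariant under every permutation of the variables), let d ≥ 1 be an integer with d dividing n or d dividing n − 1, and let ω ∈ ℂ be a primitive d-th root of unity. Then the complex number f(1, ω, ω^2, …, ω^(n−1)) is an integer, i.e., there exists m ∈ ℤ with f(1, ω, …, ω^(n−1)) = m. -/

import Mathlib

open MvPolynomial

private lemma prod_range_d (d : ℕ) (hd : 1 ≤ d) (ω : ℂ) (hω : IsPrimitiveRoot ω d) :
    ∏ i ∈ Finset.range d, (Polynomial.X - Polynomial.C (ω ^ i)) =
      Polynomial.X ^ d - 1 := by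
  have hmon : (Polynomial.X ^ d - 1 : Polynomial ℂ).Monic := by
    simpa using Polynomial.monic_X_pow_sub_C (1 : ℂ) (Nat.one_le_iff_ne_zero.mp hd)
  have hroots : (Polynomial.X ^ d - 1 : Polynomial ℂ).roots =
      (Multiset.range d).map (fun i => ω ^ i * 1) := by
    have h := hω.nthRoots_eq (α := (1 : ℂ)) (a := (1 : ℂ)) (one_pow d)
    rw [show (Polynomial.X ^ d - 1 : Polynomial ℂ) = Polynomial.X ^ d - Polynomial.C 1 by simp,
      ← Polynomial.nthRoots, h]
  have hsplit := Polynomial.Splits.eq_prod_roots_of_monic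
    (IsAlgClosed.splits _) hmon
  rw [hroots] at hsplit
  rw [hsplit, Multiset.map_map]
  simp [Finset.prod, Finset.range_val, Multiset.map_map, Function.comp]

private lemma prod_range_mul (d : ℕ) (hd : 1 ≤ d) (ω : ℂ) (hω : IsPrimitiveRoot ω d)
    (q : ℕ) :
    ∏ i ∈ Finset.range (q * d), (Polynomial.X - Polynomial.C (ω ^ i)) =
      (Polynomial.X ^ d - 1) ^ q := by
  induction q with
  | zero => simp
  | succ q ih =>
    rw [Nat.succ_mul, Finset.prod_range_add, ih, pow_succ]
    congr 1
    have h1 : ∀ i, ω ^ (q * d + i) = ω ^ i := by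
      intro i
      rw [pow_add, pow_mul', hω.pow_eq_one, one_pow, one_mul]
    calc ∏ i ∈ Finset.range d, (Polynomial.X - Polynomial.C (ω ^ (q * d + i)))
        = ∏ i ∈ Finset.range d, (Polynomial.X - Polynomial.C (ω ^ i)) := by
          exact Finset.prod_congr rfl fun i _ => by rw [h1]
      _ = Polynomial.X ^ d - 1 := prod_range_d d hd ω hω

/-- **Observation (Galois-theoretic integrality, part b).**
If `f ∈ ℤ[z_1, …, z_n]` is symmetric, `d ∣ n` or `d ∣ (n-1)`, and `ω` is a primitive
`d`th root of unity, then `f(1, ω, …, ω^(n-1)) ∈ ℤ`. -/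
theorem stmt_10 (n d : ℕ) (hd : 1 ≤ d) (hdvd : d ∣ n ∨ d ∣ (n - 1))
    (f : MvPolynomial (Fin n) ℤ) (hf : f.IsSymmetric)
    (ω : ℂ) (hω : IsPrimitiveRoot ω d) :
    ∃ m : ℤ, MvPolynomial.aeval (fun i : Fin n => ω ^ (i : ℕ)) f = (m : ℂ) := by
  -- the integer polynomial whose complex image is ∏ (X - ω^i)
  obtain ⟨Q, hQ⟩ : ∃ Q : Polynomial ℤ, Q.map (Int.castRingHom ℂ) =
      ∏ i ∈ Finset.range n, (Polynomial.X - Polynomial.C (ω ^ i)) := by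
    rcases Nat.eq_zero_or_pos n with rfl | hn
    · exact ⟨1, by simp⟩
    rcases hdvd with ⟨q, rfl⟩ | hdvd'
    · refine ⟨(Polynomial.X ^ d - 1) ^ q, ?_⟩
      rw [mul_comm d q, prod_range_mul d hd ω hω q]
      push_cast [Polynomial.map_pow, Polynomial.map_sub, Polynomial.map_one,
        Polynomial.map_pow, Polynomial.map_X]
      simp
    · obtain ⟨q, hq⟩ := hdvd'
      have hn1 : n = d * q + 1 := by omega
      subst hn1
      refine ⟨(Polynomial.X ^ d - 1) ^ q * (Polynomial.X - 1), ?_⟩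
      rw [mul_comm d q, Finset.prod_range_succ, prod_range_mul d hd ω hω q, pow_mul',
        hω.pow_eq_one, one_pow]
      simp [Polynomial.map_pow]
  -- fundamental theorem of symmetric polynomials
  obtain ⟨g, hg⟩ := esymmAlgHom_surjective (σ := Fin n) ℤ (le_of_eq (Fintype.card_fin n))
    ⟨f, (mem_symmetricSubalgebra f).mpr hf⟩
  have hgf : aeval (fun i : Fin n => esymm (Fin n) ℤ ((i : ℕ) + 1)) g = f := by
    rw [← esymmAlgHom_apply, hg]
  set x : Fin n → ℂ := fun i : Fin n => ω ^ (i : ℕ) with hx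
  set m' : Fin n → ℤ := fun i => (-1) ^ ((i : ℕ) + 1) * Q.coeff (n - ((i : ℕ) + 1)) with hm'
  have hM : (((Finset.univ : Finset (Fin n)).val.map x).map
      (fun t => Polynomial.X - Polynomial.C t)).prod = Q.map (Int.castRingHom ℂ) := by
    rw [hQ, Multiset.map_map,
      ← Fin.prod_univ_eq_prod_range (fun i => Polynomial.X - Polynomial.C (ω ^ i)) n]
    rfl
  have hcard : Multiset.card ((Finset.univ : Finset (Fin n)).val.map x) = n := by simp
  have hv : ∀ i : Fin n, aeval x (esymm (Fin n) ℤ ((i : ℕ) + 1)) = ((m' i : ℤ) : ℂ) := by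
    intro i
    rw [aeval_esymm_eq_multiset_esymm]
    have h1 : (i : ℕ) + 1 ≤ n := i.isLt
    have h2 := Multiset.prod_X_sub_C_coeff ((Finset.univ : Finset (Fin n)).val.map x)
      (k := n - ((i : ℕ) + 1)) (by rw [hcard]; omega)
    rw [hcard, show n - (n - ((i : ℕ) + 1)) = (i : ℕ) + 1 by omega, hM] at h2
    have hsq : ((-1 : ℂ)) ^ ((i : ℕ) + 1) * (-1) ^ ((i : ℕ) + 1) = 1 := by
      rw [← pow_add]; exact Even.neg_one_pow ⟨(i : ℕ) + 1, rfl⟩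
    have h3 : ((Finset.univ : Finset (Fin n)).val.map x).esymm ((i : ℕ) + 1) =
        (-1 : ℂ) ^ ((i : ℕ) + 1) * (Q.map (Int.castRingHom ℂ)).coeff (n - ((i : ℕ) + 1)) := by
      rw [h2, ← mul_assoc, hsq, one_mul]
    rw [h3, Polynomial.coeff_map, hm']
    simp only [eq_intCast]
    push_cast
    ring
  refine ⟨aeval m' g, ?_⟩
  calc aeval x f = aeval x (aeval (fun i : Fin n => esymm (Fin n) ℤ ((i : ℕ) + 1)) g) := by
        rw [hgf]
    _ = aeval (fun i : Fin n => aeval x (esymm (Fin n) ℤ ((i : ℕ) + 1))) g :=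
        comp_aeval_apply (f := fun i : Fin n => esymm (Fin n) ℤ ((i : ℕ) + 1)) (aeval x) g
    _ = aeval (fun i : Fin n => ((m' i : ℤ) : ℂ)) g := by
        exact congrArg (fun v : Fin n → ℂ => aeval v g) (funext hv)
    _ = ((aeval m' g : ℤ) : ℂ) := by
        have := (comp_aeval_apply (Algebra.ofId ℤ ℂ) (f := m') g).symm
        simpa [Algebra.ofId_apply, algebraMap_int_eq] using this
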